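/- Let μ > 0 and define z : ℝ → ℂ² by z(x) = ( √(μ²/(μ²+1))·e^{−ix/μ}, √(1/(μ²+1))·e^{iμx} ). Then for every x ∈ ℝ: ‖z(x)‖ = 1, ⟨z′(x), i·z(x)⟩_ℝ = 0, and ‖z′(x)‖ = 1. That is, z is a unit-speed Legendre curve in the unit sphere S³ ⊂ ℂ². -/

import Mathlib

open scoped ComplexInnerProductSpace

theorem stmt_7 (μ : ℝ) (hμ : 0 < μ)
    (z : ℝ → EuclideanSpace ℂ (Fin 2))
    (hz : ∀ x : ℝ, z x = (WithLp.equiv 2 (Fin 2 → ℂ)).symm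
      ![((Real.sqrt (μ^2/(μ^2 + 1)) : ℝ) : ℂ) * Complex.exp (-Complex.I * ((x/μ : ℝ) : ℂ)),
        ((Real.sqrt (1/(μ^2 + 1)) : ℝ) : ℂ) * Complex.exp (Complex.I * ((μ*x : ℝ) : ℂ))]) :
    ∀ x : ℝ, ‖z x‖ = 1 ∧ (⟪deriv z x, Complex.I • z x⟫).re = 0 ∧ ‖deriv z x‖ = 1 := by
  have hμ1 : (0:ℝ) < μ^2 + 1 := by positivity
  set a : ℝ := Real.sqrt (μ^2/(μ^2+1)) with ha
  set b : ℝ := Real.sqrt (1/(μ^2+1)) with hb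
  have ha0 : 0 ≤ a := Real.sqrt_nonneg _
  have hb0 : 0 ≤ b := Real.sqrt_nonneg _
  have ha2 : a^2 = μ^2/(μ^2+1) := Real.sq_sqrt (by positivity)
  have hb2 : b^2 = 1/(μ^2+1) := Real.sq_sqrt (by positivity)
  set f : ℝ → ℂ := fun t => (a:ℂ) * Complex.exp (-Complex.I * ((t/μ : ℝ) : ℂ)) with hf
  set g : ℝ → ℂ := fun t => (b:ℂ) * Complex.exp (Complex.I * ((μ*t : ℝ) : ℂ)) with hg
  set f' : ℝ → ℂ := fun t => (a:ℂ) * (Complex.exp (-Complex.I * ((t/μ : ℝ) : ℂ)) * (-Complex.I * (1/μ))) with hf'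
  set g' : ℝ → ℂ := fun t => (b:ℂ) * (Complex.exp (Complex.I * ((μ*t : ℝ) : ℂ)) * (Complex.I * μ)) with hg'
  have hdf : ∀ t : ℝ, HasDerivAt f (f' t) t := by
    intro t
    have h0 : HasDerivAt (fun t : ℝ => ((t/μ : ℝ) : ℂ)) (1/μ : ℂ) t := by
      have h1 : HasDerivAt (fun t : ℝ => ((t : ℂ) / μ)) (1/μ : ℂ) t := by
        simpa using (Complex.ofRealCLM.hasDerivAt (x := t)).div_const (μ : ℂ)
      convert h1 using 2 with s
      push_cast; ring
    exact ((h0.const_mul (-Complex.I)).cexp).const_mul _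
  have hdg : ∀ t : ℝ, HasDerivAt g (g' t) t := by
    intro t
    have h0 : HasDerivAt (fun t : ℝ => ((μ*t : ℝ) : ℂ)) (μ : ℂ) t := by
      have h1 : HasDerivAt (fun t : ℝ => (μ : ℂ) * (t : ℂ)) (μ : ℂ) t := by
        simpa using (Complex.ofRealCLM.hasDerivAt (x := t)).const_mul (μ : ℂ)
      convert h1 using 2 with s
      push_cast; ring
    exact ((h0.const_mul Complex.I).cexp).const_mul _
  set L : (Fin 2 → ℂ) →L[ℝ] EuclideanSpace ℂ (Fin 2) :=
    (EuclideanSpace.equiv (Fin 2) ℂ).symm.toContinuousLinearMap.restrictScalars ℝ with hL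
  have hzeq : z = fun t => L ![f t, g t] := by
    funext t; rw [hz t]; rfl
  set w : ℝ → EuclideanSpace ℂ (Fin 2) := fun t => L ![f' t, g' t] with hw
  have hdz : ∀ t : ℝ, HasDerivAt z (w t) t := by
    intro t
    have hF : HasDerivAt (fun t : ℝ => (![f t, g t] : Fin 2 → ℂ)) ![f' t, g' t] t := by
      rw [hasDerivAt_pi]
      intro i
      fin_cases i
      · simpa using hdf t
      · simpa using hdg t
    rw [hzeq]
    exact (L.hasFDerivAt).comp_hasDerivAt t hF
  intro x
  have hderiv : deriv z x = w x := (hdz x).deriv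
  have hLapp : ∀ (v : Fin 2 → ℂ) (i : Fin 2), (L v : EuclideanSpace ℂ (Fin 2)) i = v i :=
    fun v i => rfl
  -- norms of exponentials
  have hef : ‖Complex.exp (-Complex.I * ((x/μ : ℝ) : ℂ))‖ = 1 := by
    rw [Complex.norm_exp]; simp [Complex.mul_re]
  have heg : ‖Complex.exp (Complex.I * ((μ*x : ℝ) : ℂ))‖ = 1 := by
    rw [Complex.norm_exp]; simp [Complex.mul_re]
  have hconjEf : (starRingEnd ℂ) (Complex.exp (-Complex.I * ((x/μ : ℝ) : ℂ))) *
      Complex.exp (-Complex.I * ((x/μ : ℝ) : ℂ)) = 1 := by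
    rw [← Complex.normSq_eq_conj_mul_self, Complex.normSq_eq_norm_sq, hef]; norm_num
  have hconjEg : (starRingEnd ℂ) (Complex.exp (Complex.I * ((μ*x : ℝ) : ℂ))) *
      Complex.exp (Complex.I * ((μ*x : ℝ) : ℂ)) = 1 := by
    rw [← Complex.normSq_eq_conj_mul_self, Complex.normSq_eq_norm_sq, heg]; norm_num
  have hμ0 : (μ : ℂ) ≠ 0 := by exact_mod_cast hμ.ne'
  refine ⟨?_, ?_, ?_⟩
  · rw [hzeq]
    rw [EuclideanSpace.norm_eq]
    simp only [hLapp, Fin.sum_univ_two, Matrix.cons_val_zero, Matrix.cons_val_one, Matrix.head_cons]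
    rw [show (1:ℝ) = Real.sqrt 1 by simp]
    congr 1
    simp only [hf, hg, norm_mul, map_mul, hef, heg, Complex.norm_real, Real.norm_eq_abs,
      abs_of_nonneg ha0, abs_of_nonneg hb0, mul_one]
    rw [ha2, hb2]; field_simp
  · rw [hderiv, hzeq]
    simp only [hw]
    rw [PiLp.inner_apply]
    simp only [hLapp, Fin.sum_univ_two, Matrix.cons_val_zero, Matrix.cons_val_one,
      Matrix.head_cons, RCLike.inner_apply, PiLp.smul_apply, smul_eq_mul]
    have key : Complex.I * f x * (starRingEnd ℂ) (f' x) + Complex.I * g x * (starRingEnd ℂ) (g' x)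
        = ((-(a^2)/μ + b^2*μ : ℝ) : ℂ) := by
      simp only [hf, hg, hf', hg', map_mul, map_neg, map_div₀, map_one,
        Complex.conj_I, Complex.conj_ofReal]
      push_cast [Complex.ofReal_div, Complex.ofReal_mul] at hconjEf hconjEg ⊢
      linear_combination (norm := (ring_nf; simp only [Complex.I_sq]; ring1)) (-((a:ℂ)^2)/μ) * hconjEf + ((b:ℂ)^2 * μ) * hconjEg
    rw [key, Complex.ofReal_re]
    rw [ha2, hb2]
    field_simp
    ring
  · rw [hderiv, hw]
    rw [EuclideanSpace.norm_eq]
    simp only [hLapp, Fin.sum_univ_two, Matrix.cons_val_zero, Matrix.cons_val_one, Matrix.head_cons]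
    rw [show (1:ℝ) = Real.sqrt 1 by simp]
    congr 1
    simp only [hf', hg', norm_mul, map_mul, hef, heg, Complex.norm_real, Real.norm_eq_abs,
      abs_of_nonneg ha0, abs_of_nonneg hb0, map_neg, Complex.norm_I, norm_div, norm_one,
      mul_one, one_mul, abs_of_pos hμ, norm_neg]
    rw [mul_pow, mul_pow, ha2, hb2]
    field_simp
    ring
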